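/- For real symmetric positive definite n×n matrices A, B: Tr(√(√A·B·√A)) = max{Tr(K) : K ∈ ℝ^{n×n}, [[A, K],[Kᵀ, B]] ⪰ 0}. -/

import Mathlib

open Matrix BigOperators

open Classical in
noncomputable def msqrt {n : ℕ} (M : Matrix (Fin n) (Fin n) ℝ) : Matrix (Fin n) (Fin n) ℝ :=
  if h : M.PosSemidef then
    (h.1.eigenvectorUnitary : Matrix (Fin n) (Fin n) ℝ) *
      diagonal ((↑) ∘ (Real.sqrt ·) ∘ h.1.eigenvalues) *
      (star h.1.eigenvectorUnitary : Matrix (Fin n) (Fin n) ℝ)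
  else 0

noncomputable def fnorm {n : ℕ} (A : Matrix (Fin n) (Fin n) ℝ) : ℝ :=
  Real.sqrt (∑ i, ∑ j, (A i j) ^ 2)
noncomputable def Matrix.PosSemidef.sqrt {m : Type*} [Fintype m] [DecidableEq m] {M : Matrix m m ℝ}
    (h : M.PosSemidef) : Matrix m m ℝ :=
  (h.1.eigenvectorUnitary : Matrix m m ℝ) * diagonal ((↑) ∘ (Real.sqrt ·) ∘ h.1.eigenvalues) *
    (star h.1.eigenvectorUnitary : Matrix m m ℝ)

lemma Matrix.PosSemidef.posSemidef_sqrt {m : Type*} [Fintype m] [DecidableEq m] {M : Matrix m m ℝ}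
    (h : M.PosSemidef) : h.sqrt.PosSemidef := by
  unfold Matrix.PosSemidef.sqrt
  have hd : (diagonal ((↑) ∘ (Real.sqrt ·) ∘ h.1.eigenvalues) : Matrix m m ℝ).PosSemidef :=
    posSemidef_diagonal_iff.mpr (fun i => by simp [Real.sqrt_nonneg])
  have := hd.mul_mul_conjTranspose_same (h.1.eigenvectorUnitary : Matrix m m ℝ)
  rwa [← Matrix.star_eq_conjTranspose] at this

lemma Matrix.PosSemidef.sqrt_mul_self {m : Type*} [Fintype m] [DecidableEq m] {M : Matrix m m ℝ}
    (h : M.PosSemidef) : h.sqrt * h.sqrt = M := by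
  unfold Matrix.PosSemidef.sqrt
  have hU : (star h.1.eigenvectorUnitary : Matrix m m ℝ) * (h.1.eigenvectorUnitary : Matrix m m ℝ) = 1 :=
    Unitary.coe_star_mul_self _
  conv_rhs => rw [h.1.spectral_theorem]
  rw [Unitary.conjStarAlgAut_apply]
  simp only [Matrix.mul_assoc]
  rw [← Matrix.mul_assoc _ (h.1.eigenvectorUnitary : Matrix m m ℝ), hU, Matrix.one_mul,
    ← Matrix.mul_assoc (diagonal _), diagonal_mul_diagonal]
  congr 3
  funext i
  simp [Real.mul_self_sqrt (h.eigenvalues_nonneg i)]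


private lemma aux_trace_nonneg {m : Type*} [Fintype m] [DecidableEq m]
    {P : Matrix m m ℝ} (hP : P.PosSemidef) : 0 ≤ P.trace := by
  rw [Matrix.trace]
  refine Finset.sum_nonneg fun i _ => ?_
  exact hP.diag_nonneg

private lemma aux_trace_fromBlocks {m : Type*} [Fintype m] (X Y Z W : Matrix m m ℝ) :
    (Matrix.fromBlocks X Y Z W).trace = X.trace + W.trace := by
  simp [Matrix.trace, Fintype.sum_sum_type, Matrix.fromBlocks]

private lemma aux_trace_mul_nonneg {m : Type*} [Fintype m] [DecidableEq m]
    {P Q : Matrix m m ℝ} (hP : P.PosSemidef) (hQ : Q.PosSemidef) :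
    0 ≤ (P * Q).trace := by
  have hs := hQ.posSemidef_sqrt
  have h1 : (P * Q).trace = (hQ.sqrt * P * hQ.sqrt).trace := by
    conv_lhs => rw [← hQ.sqrt_mul_self]
    rw [← Matrix.mul_assoc, Matrix.trace_mul_comm, ← Matrix.mul_assoc]
  rw [h1]
  have := hP.conjTranspose_mul_mul_same hQ.sqrt
  rw [hs.1.eq] at this
  exact aux_trace_nonneg this

theorem stmt_18 {n : ℕ} (A B : Matrix (Fin n) (Fin n) ℝ)
    (hA : A.PosDef) (hB : B.PosDef) :
    IsGreatest {t : ℝ | ∃ K : Matrix (Fin n) (Fin n) ℝ,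
        (Matrix.fromBlocks A K Kᵀ B).PosSemidef ∧ t = K.trace}
      (msqrt (msqrt A * B * msqrt A)).trace := by
  classical
  have hApsd := hA.posSemidef
  set T : Matrix (Fin n) (Fin n) ℝ := msqrt A with hTdef
  have hTeq : T = hApsd.sqrt := by rw [hTdef, msqrt, dif_pos hApsd]; rfl
  have hTpsd : T.PosSemidef := hTeq ▸ hApsd.posSemidef_sqrt
  have hTsym : Tᵀ = T := hTpsd.1.eq
  have hTT : T * T = A := by rw [hTeq]; exact hApsd.sqrt_mul_self
  have hTdet : IsUnit T.det := by
    have : T.det * T.det = A.det := by rw [← Matrix.det_mul, hTT]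
    have hAdet := hA.det_pos
    refine isUnit_iff_ne_zero.mpr fun h => ?_
    rw [h, mul_zero] at this; rw [← this] at hAdet; exact lt_irrefl 0 hAdet
  have hTiT : T⁻¹ * T = 1 := Matrix.nonsing_inv_mul T hTdet
  have hTTi : T * T⁻¹ = 1 := Matrix.mul_nonsing_inv T hTdet
  have hTisym : (T⁻¹)ᵀ = T⁻¹ := by rw [Matrix.transpose_nonsing_inv, hTsym]
  -- M = √A B √A
  set M : Matrix (Fin n) (Fin n) ℝ := T * B * T with hMdef
  have hMpsd : M.PosSemidef := by
    have := hB.posSemidef.conjTranspose_mul_mul_same T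
    rwa [Matrix.conjTranspose_eq_transpose_of_trivial, hTsym] at this
  set S : Matrix (Fin n) (Fin n) ℝ := msqrt M with hSdef
  have hSeq : S = hMpsd.sqrt := by rw [hSdef, msqrt, dif_pos hMpsd]; rfl
  have hSpsd : S.PosSemidef := hSeq ▸ hMpsd.posSemidef_sqrt
  have hSsym : Sᵀ = S := hSpsd.1.eq
  have hSS : S * S = M := by rw [hSeq]; exact hMpsd.sqrt_mul_self
  have hSdet : IsUnit S.det := by
    have h1 : S.det * S.det = M.det := by rw [← Matrix.det_mul, hSS]
    have hMdet : M.det ≠ 0 := by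
      have : M.det = T.det * B.det * T.det := by rw [hMdef, Matrix.det_mul, Matrix.det_mul]
      rw [this]
      exact mul_ne_zero (mul_ne_zero hTdet.ne_zero (ne_of_gt hB.det_pos)) hTdet.ne_zero
    refine isUnit_iff_ne_zero.mpr fun h => ?_
    rw [h, mul_zero] at h1; exact hMdet h1.symm
  have hSiS : S⁻¹ * S = 1 := Matrix.nonsing_inv_mul S hSdet
  have hSSi : S * S⁻¹ = 1 := Matrix.mul_nonsing_inv S hSdet
  constructor
  · -- membership: K = T * S * T⁻¹
    refine ⟨T * S * T⁻¹, ?_, ?_⟩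
    · -- fromBlocks A K Kᵀ B = Nᴴ N
      set K : Matrix (Fin n) (Fin n) ℝ := T * S * T⁻¹ with hKdef
      have hKT : Kᵀ = T⁻¹ * S * T := by
        rw [hKdef, Matrix.transpose_mul, Matrix.transpose_mul, hTisym, hSsym, hTsym,
          Matrix.mul_assoc]
      set N : Matrix (Fin n ⊕ Fin n) (Fin n ⊕ Fin n) ℝ :=
        Matrix.fromBlocks T (S * T⁻¹) 0 0 with hNdef
      have key : Matrix.fromBlocks A K Kᵀ B = Nᴴ * N := by
        rw [hNdef, Matrix.fromBlocks_conjTranspose, Matrix.fromBlocks_multiply]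
        simp only [Matrix.conjTranspose_eq_transpose_of_trivial, Matrix.transpose_zero,
          Matrix.transpose_mul, hTsym, hSsym, hTisym, Matrix.mul_zero, Matrix.zero_mul,
          add_zero, zero_add]
        have e1 : T * (S * T⁻¹) = K := by rw [hKdef, Matrix.mul_assoc]
        have e3 : T⁻¹ * S * (S * T⁻¹) = B := by
          have h4 : T⁻¹ * S * (S * T⁻¹) = T⁻¹ * (S * S) * T⁻¹ := by
            simp only [Matrix.mul_assoc]
          rw [h4, hSS, hMdef]
          simp only [Matrix.mul_assoc]
          rw [hTTi, Matrix.mul_one, ← Matrix.mul_assoc, hTiT, Matrix.one_mul]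
        rw [hTT, e1, ← hKT, e3]
      rw [key]
      exact Matrix.posSemidef_conjTranspose_mul_self N
    · rw [Matrix.trace_mul_comm, ← Matrix.mul_assoc, hTiT, Matrix.one_mul]
  · -- upper bound
    rintro t ⟨K, hPSD, rfl⟩
    set W1 : Matrix (Fin n) (Fin n) ℝ := T⁻¹ * S * T⁻¹ with hW1def
    set W2 : Matrix (Fin n) (Fin n) ℝ := T * S⁻¹ * T with hW2def
    have hW1psd : W1.PosSemidef := by
      have := hSpsd.conjTranspose_mul_mul_same T⁻¹
      rwa [Matrix.conjTranspose_eq_transpose_of_trivial, hTisym] at this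
    have hW1W2 : W1 * W2 = 1 := by
      calc W1 * W2 = T⁻¹ * S * ((T⁻¹ * T) * (S⁻¹ * T)) := by
            rw [hW1def, hW2def]; simp only [Matrix.mul_assoc]
        _ = T⁻¹ * ((S * S⁻¹) * T) := by rw [hTiT, Matrix.one_mul, Matrix.mul_assoc, Matrix.mul_assoc]
        _ = 1 := by rw [hSSi, Matrix.one_mul, hTiT]
    have hW1det : IsUnit W1.det := by
      refine isUnit_iff_ne_zero.mpr fun h => ?_
      have : W1.det * W2.det = 1 := by rw [← Matrix.det_mul, hW1W2, Matrix.det_one]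
      rw [h, zero_mul] at this; exact zero_ne_one this
    set C : Matrix (Fin n) (Fin n) ℝ := hW1psd.sqrt with hCdef
    have hCpsd : C.PosSemidef := hW1psd.posSemidef_sqrt
    have hCsym : Cᵀ = C := hCpsd.1.eq
    have hCC : C * C = W1 := hW1psd.sqrt_mul_self
    have hCdet : IsUnit C.det := by
      have : C.det * C.det = W1.det := by rw [← Matrix.det_mul, hCC]
      refine isUnit_iff_ne_zero.mpr fun h => ?_
      rw [h, zero_mul] at this; exact hW1det.ne_zero this.symm
    have hCiC : C⁻¹ * C = 1 := Matrix.nonsing_inv_mul C hCdet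
    have hCCi : C * C⁻¹ = 1 := Matrix.mul_nonsing_inv C hCdet
    have hCisym : (C⁻¹)ᵀ = C⁻¹ := by rw [Matrix.transpose_nonsing_inv, hCsym]
    have hCiCi : C⁻¹ * C⁻¹ = W2 := by
      have h1 : (C * C)⁻¹ = W2 := by rw [hCC]; exact Matrix.inv_eq_right_inv hW1W2
      rw [← h1, Matrix.mul_inv_rev]
    -- Q = fromBlocks W1 (-1) (-1) W2 is PSD
    set N : Matrix (Fin n ⊕ Fin n) (Fin n ⊕ Fin n) ℝ :=
      Matrix.fromBlocks C (-(C⁻¹)) 0 0 with hNdef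
    have hQ : Matrix.fromBlocks W1 (-1) (-1) W2 = Nᴴ * N := by
      rw [hNdef, Matrix.fromBlocks_conjTranspose, Matrix.fromBlocks_multiply]
      simp only [Matrix.conjTranspose_eq_transpose_of_trivial, Matrix.transpose_zero,
        Matrix.transpose_neg, hCsym, hCisym, Matrix.mul_zero, Matrix.zero_mul,
        add_zero, zero_add, Matrix.mul_neg, Matrix.neg_mul, neg_neg]
      rw [hCC, hCCi, hCiC, hCiCi]
    have hQpsd : (Matrix.fromBlocks W1 (-1) (-1) W2 : Matrix (Fin n ⊕ Fin n) (Fin n ⊕ Fin n) ℝ).PosSemidef := by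
      rw [hQ]; exact Matrix.posSemidef_conjTranspose_mul_self N
    have htr := aux_trace_mul_nonneg hPSD hQpsd
    rw [Matrix.fromBlocks_multiply] at htr
    rw [aux_trace_fromBlocks] at htr
    have hAW1 : (A * W1).trace = S.trace := by
      rw [hW1def, ← hTT]
      rw [show T * T * (T⁻¹ * S * T⁻¹) = T * ((T * T⁻¹) * S) * T⁻¹ by
        simp only [Matrix.mul_assoc]]
      rw [hTTi, Matrix.one_mul, Matrix.trace_mul_comm, ← Matrix.mul_assoc, hTiT, Matrix.one_mul]
    have hBW2 : (B * W2).trace = S.trace := by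
      rw [hW2def, ← Matrix.mul_assoc, Matrix.trace_mul_comm]
      rw [show T * (B * (T * S⁻¹)) = (T * B * T) * S⁻¹ by simp only [Matrix.mul_assoc]]
      rw [← hMdef, ← hSS, Matrix.mul_assoc, hSSi, Matrix.mul_one]
    have htrK : (Kᵀ * (-1) : Matrix (Fin n) (Fin n) ℝ).trace = -K.trace := by
      rw [Matrix.mul_neg, Matrix.mul_one, Matrix.trace_neg, Matrix.trace_transpose]
    have htrK2 : (K * (-1) : Matrix (Fin n) (Fin n) ℝ).trace = -K.trace := by
      rw [Matrix.mul_neg, Matrix.mul_one, Matrix.trace_neg]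
    rw [Matrix.trace_add, Matrix.trace_add, hAW1, htrK2, htrK, hBW2] at htr
    have : (msqrt (msqrt A * B * msqrt A)).trace = S.trace := by rw [← hTdef, ← hMdef, ← hSdef]
    rw [this]
    linarith
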